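/- arXiv:2003.09126 — 2 statements merged into one kernel-verified Lean document; each statement's English description precedes it below -/
import Mathlib

section
/- For the sequence U_n = 1_{A_{n-1}^c ∩ ... ∩ A_{n-κ+1}^c} + (1 - 1_{A_{n-1}^c ∩ ... ∩ A_{n-κ+1}^c})·1_{A_n} built from independent events (A_n)_{n∈ℤ} each of probability p, one has P(U_n = 0, U_{n+1} = 0, ..., U_{n+κ-1} = 0) = 0 for every n; i.e., it is almost impossible to have κ consecutive zeros. -/
open MeasureTheory ProbabilityTheory Filter
open scoped Classical

/-- For the sequence `U_n` built from independent events
`(A_n)_{n ∈ ℤ}` each of probability `p` (with `κ ≥ 2`), it is almost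
impossible to have `κ` consecutive zeros:
`P(U_n = 0, U_{n+1} = 0, ..., U_{n+κ-1} = 0) = 0` for every `n`. -/
theorem stopped_clock_no_kappa_zeros
    {Ω : Type*} [MeasurableSpace Ω] (P : Measure Ω) [IsProbabilityMeasure P]
    (κ : ℕ) (hκ : 2 ≤ κ)
    (A : ℤ → Set Ω) (hAmeas : ∀ n, MeasurableSet (A n))
    (hAindep : ProbabilityTheory.iIndepSet A P)
    (p : ℝ) (hp0 : 0 ≤ p) (hp1 : p ≤ 1)
    (hp : ∀ n, P (A n) = ENNReal.ofReal p)
    (U : ℤ → Ω → ℕ)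
    (hU : ∀ (n : ℤ) (ω : Ω),
      U n ω = if ∀ i ∈ Finset.Icc 1 (κ - 1), ω ∉ A (n - (i : ℤ)) then 1
              else if ω ∈ A n then 1 else 0) :
    ∀ n : ℤ, P {ω | ∀ j ∈ Finset.range κ, U (n + (j : ℤ)) ω = 0} = 0 := by
  intro n
  have hset : {ω | ∀ j ∈ Finset.range κ, U (n + (j : ℤ)) ω = 0} = ∅ := by
    ext ω
    simp only [Set.mem_setOf_eq, Set.mem_empty_iff_false, iff_false]
    intro h
    -- each U(n+j) ω = 0 forces ω ∉ A (n+j)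
    have hnot : ∀ j ∈ Finset.range κ, ω ∉ A (n + (j : ℤ)) := by
      intro j hj
      have h0 := h j hj
      rw [hU] at h0
      split_ifs at h0 with h1 h2
      exact h2
    -- look at j = κ - 1
    have hκ1 : κ - 1 ∈ Finset.range κ := Finset.mem_range.mpr (Nat.sub_lt (by omega) one_pos)
    have h0 := h (κ - 1) hκ1
    rw [hU] at h0
    split_ifs at h0 with h1 h2
    push_neg at h1
    obtain ⟨i, hi, hmem⟩ := h1
    rw [Finset.mem_Icc] at hi
    -- n + (κ-1) - i = n + (κ-1-i), with κ-1-i ∈ range κ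
    have hji : κ - 1 - i ∈ Finset.range κ := Finset.mem_range.mpr (by omega)
    have heq : n + ((κ - 1 : ℕ) : ℤ) - (i : ℤ) = n + ((κ - 1 - i : ℕ) : ℤ) := by
      have h1' : (1 : ℕ) ≤ i := hi.1
      have h2' : i ≤ κ - 1 := hi.2
      push_cast [Nat.cast_sub h2', Nat.cast_sub (by omega : 1 ≤ κ)]
      ring
    rw [heq] at hmem
    exact hnot _ hji hmem
  rw [hset, measure_empty]
end

section
/- In the stopped clock model, if (X_n) is lag-m* tail independent (λ(X_{n+m*}|X_n) = 0) for all m* ≥ max(1, m-κ+1), then λ(Y_{n+m}|Y_n) = P(U_1 = 0, ..., U_m = 0)·1_{m ≤ κ-1}; in particular (Y_n) is lag-m tail independent for all m ≥ κ. -/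
open MeasureTheory ProbabilityTheory Filter
open scoped Classical

/-- In the stopped clock model, if `(X_n)` is lag-`m*` tail
independent for all `m* ≥ max(1, m-κ+1)`, then
`λ(Y_{n+m}|Y_n) = P(U_1 = 0, ..., U_m = 0)·1_{m ≤ κ-1}`; in particular `(Y_n)`
is lag-`m` tail independent for all `m ≥ κ`. -/
theorem stopped_clock_lagm_tail_independence
    {Ω : Type*} [MeasurableSpace Ω] (P : Measure Ω) [IsProbabilityMeasure P]
    (κ : ℕ) (hκ : 1 ≤ κ)
    (X : ℤ → Ω → ℝ) (U : ℤ → Ω → ℕ) (Y : ℤ → Ω → ℝ)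
    (hXmeas : ∀ n, Measurable (X n)) (hUmeas : ∀ n, Measurable (U n))
    (hU01 : ∀ (n : ℤ) (ω : Ω), U n ω = 0 ∨ U n ω = 1)
    (hXF : ∀ (n : ℤ) (x : ℝ), 0 < x →
      P {ω | X n ω ≤ x} = ENNReal.ofReal (Real.exp (-1 / x)))
    (hXstat : ∀ k : ℤ, Measure.map (fun ω (n : ℤ) => X (n + k) ω) P =
      Measure.map (fun ω (n : ℤ) => X n ω) P)
    (hUstat : ∀ k : ℤ, Measure.map (fun ω (n : ℤ) => U (n + k) ω) P =
      Measure.map (fun ω (n : ℤ) => U n ω) P)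
    (hindep : IndepFun (fun ω (n : ℤ) => X n ω) (fun ω (n : ℤ) => U n ω) P)
    (hnoκ : ∀ n : ℤ, P {ω | ∀ j ∈ Finset.range κ, U (n + (j : ℤ)) ω = 0} = 0)
    (hrec : ∀ (n : ℤ) (ω : Ω), Y n ω = if U n ω = 1 then X n ω else Y (n - 1) ω)
    (hYdec : ∀ n : ℤ, ∀ᵐ ω ∂P, ∃ i ∈ Finset.range κ,
      U (n - (i : ℤ)) ω = 1 ∧ (∀ j ∈ Finset.range i, U (n - (j : ℤ)) ω = 0) ∧
      Y n ω = X (n - (i : ℤ)) ω)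
    (m : ℕ) (hm : 1 ≤ m)
    -- `(X_n)` is lag-`m*` tail independent for all `m* ≥ max(1, m-κ+1)`
    (hXti : ∀ m' : ℕ, max 1 (m - κ + 1) ≤ m' → ∀ n : ℤ,
      Tendsto (fun x : ℝ =>
          (P {ω | x < X (n + (m' : ℤ)) ω ∧ x < X n ω}).toReal /
            (P {ω | x < X n ω}).toReal)
        atTop (nhds 0)) :
    ∀ n : ℤ, Tendsto (fun x : ℝ =>
        (P {ω | x < Y (n + (m : ℤ)) ω ∧ x < Y n ω}).toReal /
          (P {ω | x < Y n ω}).toReal)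
      atTop (nhds (if m ≤ κ - 1 then
        (P {ω | ∀ j ∈ Finset.Icc (1 : ℤ) (m : ℤ), U j ω = 0}).toReal else 0)) := by
  classical
  intro n
  have hXm : Measurable (fun ω (k : ℤ) => X k ω) := measurable_pi_lambda _ hXmeas
  have hUm : Measurable (fun ω (k : ℤ) => U k ω) := measurable_pi_lambda _ hUmeas
  -- `A b i`: the most recent clock tick before (or at) time `b` was at time `b - i`
  set A : ℤ → ℕ → Set Ω := fun b i =>
    {ω | U (b - (i : ℤ)) ω = 1 ∧ ∀ j ∈ Finset.range i, U (b - (j : ℤ)) ω = 0} with hAdef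
  -- `Z b`: κ consecutive zeros ending at time `b`
  set Z : ℤ → Set Ω := fun b => {ω | ∀ j ∈ Finset.range κ, U (b - (j : ℤ)) ω = 0} with hZdef
  have hAmeas : ∀ b i, MeasurableSet (A b i) := by
    intro b i
    have h1 : MeasurableSet {ω | U (b - (i : ℤ)) ω = 1} :=
      hUmeas _ (measurableSet_singleton 1)
    have heq : A b i = {ω | U (b - (i : ℤ)) ω = 1} ∩
        ⋂ j ∈ Finset.range i, {ω | U (b - (j : ℤ)) ω = 0} := by
      ext ω; simp [hAdef, Set.mem_iInter]
    rw [heq]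
    exact h1.inter (Finset.measurableSet_biInter _ fun j _ =>
      hUmeas _ (measurableSet_singleton 0))
  -- Z b is a null set
  have hZ0 : ∀ b : ℤ, P (Z b) = 0 := by
    intro b
    have h := hnoκ (b - ((κ : ℤ) - 1))
    have hset : {ω | ∀ j ∈ Finset.range κ, U ((b - ((κ : ℤ) - 1)) + (j : ℤ)) ω = 0} = Z b := by
      ext ω
      simp only [hZdef, Set.mem_setOf_eq, Finset.mem_range]
      constructor
      · intro h j hj
        have h2 := h (κ - 1 - j) (by omega)
        have he : (b - ((κ : ℤ) - 1)) + ((κ - 1 - j : ℕ) : ℤ) = b - (j : ℤ) := by omega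
        rwa [he] at h2
      · intro h j hj
        have h2 := h (κ - 1 - j) (by omega)
        have he : b - ((κ - 1 - j : ℕ) : ℤ) = (b - ((κ : ℤ) - 1)) + (j : ℤ) := by omega
        rwa [he] at h2
    rwa [hset] at h
  -- Y agrees with X at the most recent tick
  have hYA : ∀ (i : ℕ) (b : ℤ) (ω : Ω), ω ∈ A b i → Y b ω = X (b - (i : ℤ)) ω := by
    intro i
    induction i with
    | zero =>
      intro b ω hω
      obtain ⟨h1, _⟩ := hω
      rw [hrec b ω]
      simp only [Nat.cast_zero, sub_zero] at h1 ⊢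
      simp [h1]
    | succ i ih =>
      intro b ω hω
      obtain ⟨h1, h0⟩ := hω
      have hU0 : U b ω = 0 := by
        have := h0 0 (Finset.mem_range.mpr (by omega))
        simpa using this
      have hstep : Y b ω = Y (b - 1) ω := by rw [hrec b ω]; simp [hU0]
      have h1' : U ((b - 1) - (i : ℤ)) ω = 1 := by
        have he : (b - 1) - (i : ℤ) = b - ((i + 1 : ℕ) : ℤ) := by push_cast; ring
        rw [he]; exact h1
      have h0' : ∀ j ∈ Finset.range i, U ((b - 1) - (j : ℤ)) ω = 0 := by
        intro j hj
        have hj' := Finset.mem_range.mp hj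
        have he : (b - 1) - (j : ℤ) = b - ((j + 1 : ℕ) : ℤ) := by push_cast; ring
        rw [he]
        exact h0 (j + 1) (Finset.mem_range.mpr (by omega))
      have := ih (b - 1) ω ⟨h1', h0'⟩
      rw [hstep, this]
      congr 1
      push_cast; ring
  -- the events A b i are pairwise disjoint
  have hAdisj : ∀ (b : ℤ) (i i' : ℕ), i ≠ i' → Disjoint (A b i) (A b i') := by
    have key : ∀ (b : ℤ) (i i' : ℕ), i < i' → Disjoint (A b i) (A b i') := by
      intro b i i' h
      rw [Set.disjoint_left]
      intro ω hω hω'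
      have h0 := hω'.2 i (Finset.mem_range.mpr h)
      have h1 := hω.1
      omega
    intro b i i' hne
    rcases hne.lt_or_gt with h | h
    · exact key b i i' h
    · exact (key b i' i h).symm
  -- first-tick decomposition: pointwise coverage
  have hfirst : ∀ (b : ℤ) (ω : Ω), ω ∉ Z b → ∃ i, i < κ ∧ ω ∈ A b i := by
    intro b ω hω
    simp only [hZdef, Set.mem_setOf_eq, Finset.mem_range] at hω
    push_neg at hω
    obtain ⟨j, hj, hj0⟩ := hω
    have hex : ∃ i : ℕ, U (b - (i : ℤ)) ω = 1 := by
      refine ⟨j, ?_⟩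
      rcases hU01 (b - (j : ℤ)) ω with h | h
      · exact absurd h hj0
      · exact h
    set i := Nat.find hex with hi
    have hspec : U (b - (i : ℤ)) ω = 1 := Nat.find_spec hex
    have hmin : ∀ j' < i, U (b - (j' : ℤ)) ω ≠ 1 := fun j' hj' => Nat.find_min hex hj'
    have hile : i ≤ j := Nat.find_min' hex (by
      rcases hU01 (b - (j : ℤ)) ω with h | h
      · exact absurd h hj0
      · exact h)
    refine ⟨i, by omega, hspec, ?_⟩
    intro j' hj'
    have hj'' := Finset.mem_range.mp hj'
    rcases hU01 (b - (j' : ℤ)) ω with h | h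
    · exact h
    · exact absurd h (hmin j' hj'')
  -- sandwich lemma
  have hsand : ∀ (S T W : Set Ω), T ⊆ S → S ⊆ T ∪ W → P W = 0 → P S = P T := by
    intro S T W h1 h2 hW
    refine le_antisymm ?_ (measure_mono h1)
    calc P S ≤ P (T ∪ W) := measure_mono h2
      _ ≤ P T + P W := measure_union_le _ _
      _ = P T := by rw [hW, add_zero]
  -- sum of P (A b i) over i < κ is 1
  have hsum1 : ∀ b : ℤ, ∑ i ∈ Finset.range κ, P (A b i) = 1 := by
    intro b
    have hd : (↑(Finset.range κ) : Set ℕ).PairwiseDisjoint (A b) :=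
      fun i _ i' _ hne => hAdisj b i i' hne
    rw [← measure_biUnion_finset hd fun i _ => hAmeas b i]
    refine le_antisymm prob_le_one ?_
    have hsub : (Set.univ : Set Ω) ⊆ (⋃ i ∈ Finset.range κ, A b i) ∪ Z b := by
      intro ω _
      by_cases hZω : ω ∈ Z b
      · exact Or.inr hZω
      · obtain ⟨i, hi, hωA⟩ := hfirst b ω hZω
        exact Or.inl (Set.mem_biUnion (Finset.mem_range.mpr hi) hωA)
    calc (1 : ENNReal) = P Set.univ := measure_univ.symm
      _ ≤ P ((⋃ i ∈ Finset.range κ, A b i) ∪ Z b) := measure_mono hsub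
      _ ≤ P (⋃ i ∈ Finset.range κ, A b i) + P (Z b) := measure_union_le _ _
      _ = P (⋃ i ∈ Finset.range κ, A b i) := by rw [hZ0 b, add_zero]
  -- the marginal tail of X
  set q : ℝ → ENNReal := fun x => 1 - ENNReal.ofReal (Real.exp (-1 / x)) with hqdef
  have hXq : ∀ (k : ℤ) (x : ℝ), 0 < x → P {ω | x < X k ω} = q x := by
    intro k x hx
    have hc : {ω | x < X k ω} = {ω | X k ω ≤ x}ᶜ := by
      ext ω; simp [not_le]
    have hms : MeasurableSet {ω | X k ω ≤ x} := hXmeas k measurableSet_Iic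
    rw [hc, measure_compl hms (measure_ne_top _ _), measure_univ, hXF k x hx]
  have hqpos : ∀ x : ℝ, 0 < x → 0 < q x := by
    intro x hx
    have he : Real.exp (-1 / x) < 1 := by
      have h1 : (0:ℝ) < 1 / x := by positivity
      rw [Real.exp_lt_one_iff, neg_div]
      linarith
    simp only [hqdef]
    rw [tsub_pos_iff_lt]
    exact ENNReal.ofReal_lt_one.mpr he
  have hqtop : ∀ x : ℝ, q x ≠ ⊤ := by
    intro x
    exact ne_top_of_le_ne_top ENNReal.one_ne_top tsub_le_self
  have hqR : ∀ x : ℝ, 0 < x → 0 < (q x).toReal := by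
    intro x hx
    exact ENNReal.toReal_pos (hqpos x hx).ne' (hqtop x)
  -- independence applied to A-events and X-tail events
  have hAX : ∀ (b : ℤ) (i : ℕ) (k : ℤ) (x : ℝ),
      P (A b i ∩ {ω | x < X k ω}) = P {ω | x < X k ω} * P (A b i) := by
    intro b i k x
    set SU : Set (ℤ → ℕ) :=
      {f | f (b - (i : ℤ)) = 1 ∧ ∀ j ∈ Finset.range i, f (b - (j : ℤ)) = 0} with hSUdef
    have hSU : MeasurableSet SU := by
      have heq : SU = ((fun f : ℤ → ℕ => f (b - (i : ℤ))) ⁻¹' {1}) ∩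
          ⋂ j ∈ Finset.range i, ((fun f : ℤ → ℕ => f (b - (j : ℤ))) ⁻¹' {0}) := by
        ext f; simp [hSUdef, Set.mem_iInter]
      rw [heq]
      exact ((measurable_pi_apply _) (measurableSet_singleton 1)).inter
        (Finset.measurableSet_biInter _ fun j _ =>
          (measurable_pi_apply _) (measurableSet_singleton 0))
    have hSX : MeasurableSet {f : ℤ → ℝ | x < f k} :=
      (measurable_pi_apply k) measurableSet_Ioi
    have key := hindep.measure_inter_preimage_eq_mul (s := {f : ℤ → ℝ | x < f k})
      (t := SU) hSX hSU
    have h1 : (fun ω (k : ℤ) => X k ω) ⁻¹' {f : ℤ → ℝ | x < f k} = {ω | x < X k ω} := rfl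
    have h2 : (fun ω (k : ℤ) => U k ω) ⁻¹' SU = A b i := rfl
    rw [h1, h2] at key
    rw [Set.inter_comm]
    exact key
  -- the denominator
  have hYq : ∀ (b : ℤ) (x : ℝ), 0 < x → P {ω | x < Y b ω} = q x := by
    intro b x hx
    set T : Set Ω := ⋃ i ∈ Finset.range κ, A b i ∩ {ω | x < X (b - (i : ℤ)) ω} with hTdef
    have hTsub : T ⊆ {ω | x < Y b ω} := by
      intro ω hω
      simp only [hTdef, Set.mem_iUnion, exists_prop] at hω
      obtain ⟨i, hi, hωA, hωX⟩ := hω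
      show x < Y b ω
      rw [hYA i b ω hωA]
      exact hωX
    have hSsub : {ω | x < Y b ω} ⊆ T ∪ Z b := by
      intro ω hω
      by_cases hZω : ω ∈ Z b
      · exact Or.inr hZω
      · obtain ⟨i, hi, hωA⟩ := hfirst b ω hZω
        left
        simp only [hTdef, Set.mem_iUnion, exists_prop]
        refine ⟨i, Finset.mem_range.mpr hi, hωA, ?_⟩
        show x < X (b - (i : ℤ)) ω
        rw [← hYA i b ω hωA]
        exact hω
    rw [hsand _ _ _ hTsub hSsub (hZ0 b)]
    have hd : (↑(Finset.range κ) : Set ℕ).PairwiseDisjoint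
        (fun i => A b i ∩ {ω | x < X (b - (i : ℤ)) ω}) :=
      fun i _ i' _ hne => Disjoint.mono Set.inter_subset_left Set.inter_subset_left
        (hAdisj b i i' hne)
    rw [hTdef, measure_biUnion_finset hd fun i _ =>
      (hAmeas b i).inter (hXmeas _ measurableSet_Ioi)]
    calc ∑ i ∈ Finset.range κ, P (A b i ∩ {ω | x < X (b - (i : ℤ)) ω})
        = ∑ i ∈ Finset.range κ, q x * P (A b i) := by
          refine Finset.sum_congr rfl fun i _ => ?_
          rw [hAX b i (b - (i : ℤ)) x, hXq _ x hx]
      _ = q x * ∑ i ∈ Finset.range κ, P (A b i) := by rw [Finset.mul_sum]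
      _ = q x := by rw [hsum1 b, mul_one]
  -- abbreviations for the two base points
  set b2 : ℤ := n + (m : ℤ) with hb2
  -- the numerator pieces
  set T : ℕ × ℕ → ℝ → Set Ω := fun p x =>
    (A n p.1 ∩ A b2 p.2) ∩
      ({ω | x < X (n - (p.1 : ℤ)) ω} ∩ {ω | x < X (b2 - (p.2 : ℤ)) ω}) with hTdef
  have hTmeas : ∀ p x, MeasurableSet (T p x) := by
    intro p x
    exact ((hAmeas n p.1).inter (hAmeas b2 p.2)).inter
      ((hXmeas _ measurableSet_Ioi).inter (hXmeas _ measurableSet_Ioi))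
  -- the numerator decomposition
  have hNum : ∀ x : ℝ, P {ω | x < Y b2 ω ∧ x < Y n ω}
      = ∑ p ∈ Finset.range κ ×ˢ Finset.range κ, P (T p x) := by
    intro x
    set TT : Set Ω := ⋃ p ∈ Finset.range κ ×ˢ Finset.range κ, T p x with hTTdef
    have hTsub : TT ⊆ {ω | x < Y b2 ω ∧ x < Y n ω} := by
      intro ω hω
      simp only [hTTdef, Set.mem_iUnion, exists_prop] at hω
      obtain ⟨p, hp, ⟨hωA1, hωA2⟩, hωX1, hωX2⟩ := hω
      refine ⟨?_, ?_⟩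
      · rw [hYA p.2 b2 ω hωA2]; exact hωX2
      · rw [hYA p.1 n ω hωA1]; exact hωX1
    have hSsub : {ω | x < Y b2 ω ∧ x < Y n ω} ⊆ TT ∪ (Z n ∪ Z b2) := by
      intro ω hω
      by_cases hZn : ω ∈ Z n
      · exact Or.inr (Or.inl hZn)
      by_cases hZb : ω ∈ Z b2
      · exact Or.inr (Or.inr hZb)
      obtain ⟨i, hi, hωA1⟩ := hfirst n ω hZn
      obtain ⟨i', hi', hωA2⟩ := hfirst b2 ω hZb
      left
      simp only [hTTdef, Set.mem_iUnion, exists_prop]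
      refine ⟨(i, i'), Finset.mem_product.mpr
        ⟨Finset.mem_range.mpr hi, Finset.mem_range.mpr hi'⟩, ⟨hωA1, hωA2⟩, ?_, ?_⟩
      · show x < X (n - (i : ℤ)) ω
        rw [← hYA i n ω hωA1]; exact hω.2
      · show x < X (b2 - (i' : ℤ)) ω
        rw [← hYA i' b2 ω hωA2]; exact hω.1
    have hZZ : P (Z n ∪ Z b2) = 0 := measure_union_null (hZ0 n) (hZ0 b2)
    rw [hsand _ _ _ hTsub hSsub hZZ]
    have hd : (↑(Finset.range κ ×ˢ Finset.range κ) : Set (ℕ × ℕ)).PairwiseDisjoint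
        (fun p => T p x) := by
      intro p hp p' hp' hne
      have : p.1 ≠ p'.1 ∨ p.2 ≠ p'.2 := by
        by_contra h
        push_neg at h
        exact hne (Prod.ext h.1 h.2)
      rcases this with h | h
      · exact Disjoint.mono (Set.inter_subset_left.trans Set.inter_subset_left)
          (Set.inter_subset_left.trans Set.inter_subset_left) (hAdisj n _ _ h)
      · exact Disjoint.mono (Set.inter_subset_left.trans Set.inter_subset_right)
          (Set.inter_subset_left.trans Set.inter_subset_right) (hAdisj b2 _ _ h)
    rw [hTTdef, measure_biUnion_finset hd fun p _ => hTmeas p x]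
  -- value of the diagonal terms
  have hdiag : ∀ (i : ℕ) (x : ℝ), P (T (i, m + i) x) = P {ω | x < X (n - (i : ℤ)) ω} * P (A b2 (m + i)) := by
    intro i x
    have he : b2 - ((m + i : ℕ) : ℤ) = n - (i : ℤ) := by
      simp only [hb2]; push_cast; ring
    have hsub : A b2 (m + i) ⊆ A n i := by
      intro ω hω
      obtain ⟨h1, h0⟩ := hω
      constructor
      · rwa [he] at h1
      · intro j hj
        have hj' := Finset.mem_range.mp hj
        have he2 : n - (j : ℤ) = b2 - ((m + j : ℕ) : ℤ) := by
          simp only [hb2]; push_cast; ring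
        rw [he2]
        exact h0 (m + j) (Finset.mem_range.mpr (by omega))
    have hTeq : T (i, m + i) x = A b2 (m + i) ∩ {ω | x < X (n - (i : ℤ)) ω} := by
      simp only [hTdef]
      rw [he, Set.inter_self, Set.inter_eq_right.mpr hsub]
    rw [hTeq, hAX b2 (m + i) (n - (i : ℤ)) x]
  -- the main term constant
  have hIco : ∑ i' ∈ Finset.Ico m κ, P (A b2 i')
      = P {ω | ∀ j ∈ Finset.Icc (1 : ℤ) (m : ℤ), U (n + j) ω = 0} := by
    have hd : (↑(Finset.Ico m κ) : Set ℕ).PairwiseDisjoint (A b2) :=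
      fun i _ i' _ hne => hAdisj b2 i i' hne
    rw [← measure_biUnion_finset hd fun i _ => hAmeas b2 i]
    set B : Set Ω := {ω | ∀ j ∈ Finset.Icc (1 : ℤ) (m : ℤ), U (n + j) ω = 0} with hBdef
    symm
    refine hsand _ _ (Z b2) ?_ ?_ (hZ0 b2)
    · -- union ⊆ B
      intro ω hω
      simp only [Set.mem_iUnion, exists_prop] at hω
      obtain ⟨i', hi', h1, h0⟩ := hω
      have hi'm := Finset.mem_Ico.mp hi'
      intro j hj
      have hj' := Finset.mem_Icc.mp hj
      have hjn : ((m : ℤ) - j).toNat < i' := by omega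
      have he : b2 - ((((m : ℤ) - j).toNat : ℕ) : ℤ) = n + j := by
        simp only [hb2]; omega
      have := h0 ((m : ℤ) - j).toNat (Finset.mem_range.mpr hjn)
      rwa [he] at this
    · -- B ⊆ union ∪ Z b2
      intro ω hω
      by_cases hZb : ω ∈ Z b2
      · exact Or.inr hZb
      obtain ⟨i', hi', hωA⟩ := hfirst b2 ω hZb
      left
      have him : m ≤ i' := by
        by_contra hlt
        push_neg at hlt
        have hj : ((m : ℤ) - i') ∈ Finset.Icc (1 : ℤ) (m : ℤ) := by
          rw [Finset.mem_Icc]; omega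
        have h0 := hω ((m : ℤ) - i') hj
        have he : n + ((m : ℤ) - (i' : ℤ)) = b2 - (i' : ℤ) := by
          simp only [hb2]; ring
        rw [he] at h0
        have h1 := hωA.1
        omega
      exact Set.mem_biUnion (Finset.mem_Ico.mpr ⟨him, hi'⟩) hωA
  -- stationarity of U: shift the zero-block event to the origin
  have hstatU : P {ω | ∀ j ∈ Finset.Icc (1 : ℤ) (m : ℤ), U (n + j) ω = 0}
      = P {ω | ∀ j ∈ Finset.Icc (1 : ℤ) (m : ℤ), U j ω = 0} := by
    set TU : Set (ℤ → ℕ) := {f | ∀ j ∈ Finset.Icc (1 : ℤ) (m : ℤ), f j = 0} with hTUdef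
    have hTU : MeasurableSet TU := by
      have heq : TU = ⋂ j ∈ Finset.Icc (1 : ℤ) (m : ℤ),
          ((fun f : ℤ → ℕ => f j) ⁻¹' {0}) := by
        ext f; simp [hTUdef, Set.mem_iInter]
      rw [heq]
      exact Finset.measurableSet_biInter _ fun j _ =>
        (measurable_pi_apply _) (measurableSet_singleton 0)
    have hUm' : Measurable (fun ω (k : ℤ) => U (k + n) ω) :=
      measurable_pi_lambda _ fun k => hUmeas _
    have h := congrArg (fun μ : Measure (ℤ → ℕ) => μ TU) (hUstat n)
    rw [Measure.map_apply hUm' hTU, Measure.map_apply hUm hTU] at h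
    have h1 : (fun ω (k : ℤ) => U (k + n) ω) ⁻¹' TU
        = {ω | ∀ j ∈ Finset.Icc (1 : ℤ) (m : ℤ), U (n + j) ω = 0} := by
      ext ω
      simp only [Set.mem_preimage, hTUdef, Set.mem_setOf_eq]
      constructor
      · intro hf j hj; have := hf j hj; rwa [add_comm] at this
      · intro hf j hj; have := hf j hj; rwa [add_comm] at this
    have h2 : (fun ω (k : ℤ) => U k ω) ⁻¹' TU
        = {ω | ∀ j ∈ Finset.Icc (1 : ℤ) (m : ℤ), U j ω = 0} := rfl
    rw [h1, h2] at h
    exact h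
  -- the limit of each summand
  set L : ℕ × ℕ → ℝ := fun p => if p.2 = m + p.1 then (P (A b2 p.2)).toReal else 0 with hLdef
  have hterm : ∀ p ∈ Finset.range κ ×ˢ Finset.range κ,
      Tendsto (fun x : ℝ => (P (T p x)).toReal / (q x).toReal) atTop (nhds (L p)) := by
    intro p hp
    obtain ⟨i, i'⟩ := p
    have hpi := Finset.mem_product.mp hp
    have hiκ := Finset.mem_range.mp hpi.1
    have hi'κ := Finset.mem_range.mp hpi.2
    by_cases hdg : i' = m + i
    · -- diagonal term: eventually constant
      subst hdg
      simp only [hLdef, if_pos rfl]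
      have hev : ∀ᶠ x : ℝ in atTop,
          (P (T (i, m + i) x)).toReal / (q x).toReal = (P (A b2 (m + i))).toReal := by
        filter_upwards [eventually_gt_atTop (0 : ℝ)] with x hx
        rw [hdiag i x, hXq _ x hx, ENNReal.toReal_mul, mul_comm, mul_div_assoc,
          div_self (hqR x hx).ne', mul_one]
      exact Tendsto.congr' (hev.mono fun x h => h.symm) tendsto_const_nhds
    · -- off-diagonal term: squeeze to zero
      simp only [hLdef, if_neg hdg]
      -- choose base point and lag
      obtain ⟨n', m', hm', he1, he2⟩ :
          ∃ (n' : ℤ) (m' : ℕ), max 1 (m - κ + 1) ≤ m' ∧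
            (n - (i : ℤ) = n' ∨ n - (i : ℤ) = n' + (m' : ℤ)) ∧
            (b2 - (i' : ℤ) = n' ∨ b2 - (i' : ℤ) = n' + (m' : ℤ)) ∧
            (n - (i : ℤ) = n' ∨ b2 - (i' : ℤ) = n') ∧
            (n - (i : ℤ) = n' + (m' : ℤ) ∨ b2 - (i' : ℤ) = n' + (m' : ℤ)) := by
        rcases Nat.lt_or_ge i' (m + i) with h | h
        · refine ⟨n - (i : ℤ), m + i - i', ?_, Or.inl rfl, ?_⟩
          · omega
          · have : b2 - (i' : ℤ) = n - (i : ℤ) + ((m + i - i' : ℕ) : ℤ) := by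
              simp only [hb2]; omega
            exact ⟨Or.inr this, Or.inl rfl, Or.inr this⟩
        · have h' : m + i < i' := by omega
          refine ⟨b2 - (i' : ℤ), i' - (m + i), ?_, ?_, Or.inl rfl, Or.inr rfl, ?_⟩
          · omega
          · have : n - (i : ℤ) = b2 - (i' : ℤ) + ((i' - (m + i) : ℕ) : ℤ) := by
              simp only [hb2]; omega
            exact Or.inr this
          · have : n - (i : ℤ) = b2 - (i' : ℤ) + ((i' - (m + i) : ℕ) : ℤ) := by
              simp only [hb2]; omega
            exact Or.inl this
      obtain ⟨he2, he3, he4⟩ := he2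
      have hsubs : ∀ x : ℝ, T (i, i') x ⊆ {ω | x < X (n' + (m' : ℤ)) ω ∧ x < X n' ω} := by
        intro x ω hω
        obtain ⟨_, hωX1, hωX2⟩ := hω
        constructor
        · rcases he4 with h | h
          · rw [← h]; exact hωX1
          · rw [← h]; exact hωX2
        · rcases he3 with h | h
          · rw [← h]; exact hωX1
          · rw [← h]; exact hωX2
      have hG := hXti m' hm' n'
      refine squeeze_zero' ?_ ?_ hG
      · filter_upwards with x
        positivity
      · filter_upwards [eventually_gt_atTop (0 : ℝ)] with x hx
        rw [show P {ω | x < X n' ω} = q x from hXq n' x hx]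
        have hle : (P (T (i, i') x)).toReal
            ≤ (P {ω | x < X (n' + (m' : ℤ)) ω ∧ x < X n' ω}).toReal :=
          ENNReal.toReal_mono (measure_ne_top _ _) (measure_mono (hsubs x))
        exact (div_le_div_iff_of_pos_right (hqR x hx)).mpr hle
  -- the value of the limit sum
  have hLsum : ∑ p ∈ Finset.range κ ×ˢ Finset.range κ, L p
      = (if m ≤ κ - 1 then
        (P {ω | ∀ j ∈ Finset.Icc (1 : ℤ) (m : ℤ), U j ω = 0}).toReal else 0) := by
    have h1 : ∑ p ∈ Finset.range κ ×ˢ Finset.range κ, L p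
        = ∑ i ∈ Finset.range κ,
            (if m + i ∈ Finset.range κ then (P (A b2 (m + i))).toReal else 0) := by
      rw [Finset.sum_product]
      refine Finset.sum_congr rfl fun i _ => ?_
      simp only [hLdef]
      exact Finset.sum_ite_eq' (Finset.range κ) (m + i) (fun j => (P (A b2 j)).toReal)
    have hfil : (Finset.range κ).filter (fun i => m + i ∈ Finset.range κ)
        = Finset.range (κ - m) := by
      ext i
      simp only [Finset.mem_filter, Finset.mem_range]
      omega
    have h2 : ∑ i ∈ Finset.range κ,
          (if m + i ∈ Finset.range κ then (P (A b2 (m + i))).toReal else 0)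
        = ∑ i' ∈ Finset.Ico m κ, (P (A b2 i')).toReal := by
      rw [← Finset.sum_filter, hfil, Finset.sum_Ico_eq_sum_range]
    have hval : ∑ i' ∈ Finset.Ico m κ, (P (A b2 i')).toReal
        = (P {ω | ∀ j ∈ Finset.Icc (1 : ℤ) (m : ℤ), U j ω = 0}).toReal := by
      rw [← ENNReal.toReal_sum (fun a _ => measure_ne_top _ _), hIco, hstatU]
    rw [h1, h2, hval]
    by_cases hcase : m ≤ κ - 1
    · rw [if_pos hcase]
    · rw [if_neg hcase]
      have hempty : Finset.Ico m κ = ∅ := Finset.Ico_eq_empty (by omega)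
      have h0 : P {ω | ∀ j ∈ Finset.Icc (1 : ℤ) (m : ℤ), U j ω = 0} = 0 := by
        rw [← hstatU, ← hIco, hempty, Finset.sum_empty]
      rw [h0, ENNReal.toReal_zero]
  -- assemble
  have hmain : Tendsto (fun x : ℝ => ∑ p ∈ Finset.range κ ×ˢ Finset.range κ,
      (P (T p x)).toReal / (q x).toReal) atTop
      (nhds (∑ p ∈ Finset.range κ ×ˢ Finset.range κ, L p)) :=
    tendsto_finset_sum _ hterm
  rw [← hLsum]
  have hEq : (fun x : ℝ => ∑ p ∈ Finset.range κ ×ˢ Finset.range κ,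
        (P (T p x)).toReal / (q x).toReal)
      =ᶠ[atTop] fun x : ℝ =>
        (P {ω | x < Y b2 ω ∧ x < Y n ω}).toReal / (P {ω | x < Y n ω}).toReal := by
    filter_upwards [eventually_gt_atTop (0 : ℝ)] with x hx
    rw [hYq n x hx, hNum x, ENNReal.toReal_sum (fun p _ => measure_ne_top _ _),
      Finset.sum_div]
  exact Filter.Tendsto.congr' hEq hmain
end
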